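/- Let G be a group, k a commutative ring, W a k-module, and (V, ρ) a representation of G on a k-module V. Equip (G →₀ W) ⊗_k V with the diagonal G-action, where G acts on G →₀ W by left translation (g • f = Finsupp.mapDomain (fun h => g * h) f) and on V via ρ, and equip G →₀ (W ⊗_k V) with the left translation action. Then the k-linear map determined by single g w ⊗ v ↦ single g (w ⊗ ρ(g⁻¹) v) is a G-equivariant k-linear isomorphism from (G →₀ W) ⊗_k V onto G →₀ (W ⊗_k V). -/

import Mathlib

open TensorProduct

noncomputable def untwist (G : Type*) [Group G] (k : Type*) [CommRing k]
    (W : Type*) [AddCommGroup W] [Module k W]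
    (V : Type*) [AddCommGroup V] [Module k V] (ρ : Representation k G V) :
    (G →₀ (W ⊗[k] V)) ≃ₗ[k] (G →₀ (W ⊗[k] V)) :=
  LinearEquiv.ofLinear
    (Finsupp.lsum k fun g => (Finsupp.lsingle g).comp (LinearMap.lTensor W (ρ g⁻¹)))
    (Finsupp.lsum k fun g => (Finsupp.lsingle g).comp (LinearMap.lTensor W (ρ g)))
    (by
      apply Finsupp.lhom_ext
      intro g x
      simp only [LinearMap.coe_comp, Function.comp_apply, Finsupp.lsum_single,
        LinearMap.id_coe, id_eq]
      rw [Finsupp.lsingle_apply, Finsupp.lsum_single, LinearMap.comp_apply,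
        Finsupp.lsingle_apply]
      congr 1
      rw [← LinearMap.comp_apply, ← LinearMap.lTensor_comp, ← Module.End.mul_eq_comp,
        ← map_mul]
      simp [Module.End.one_eq_id])
    (by
      apply Finsupp.lhom_ext
      intro g x
      simp only [LinearMap.coe_comp, Function.comp_apply, Finsupp.lsum_single,
        LinearMap.id_coe, id_eq]
      rw [Finsupp.lsingle_apply, Finsupp.lsum_single, LinearMap.comp_apply,
        Finsupp.lsingle_apply]
      congr 1
      rw [← LinearMap.comp_apply, ← LinearMap.lTensor_comp, ← Module.End.mul_eq_comp,
        ← map_mul]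
      simp [Module.End.one_eq_id])

lemma untwist_single (G : Type*) [Group G] (k : Type*) [CommRing k]
    (W : Type*) [AddCommGroup W] [Module k W]
    (V : Type*) [AddCommGroup V] [Module k V] (ρ : Representation k G V)
    (g : G) (x : W ⊗[k] V) :
    untwist G k W V ρ (Finsupp.single g x) =
      Finsupp.single g (LinearMap.lTensor W (ρ g⁻¹) x) := by
  simp [untwist]

/-- Untwisting: for any representation `(V, ρ)` of `G`, the diagonal `G`-action on
`(G →₀ W) ⊗ V` is isomorphic to the left translation action on `G →₀ (W ⊗ V)` via
`single g w ⊗ v ↦ single g (w ⊗ ρ g⁻¹ v)`. -/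
theorem induced_tensor_untwisting (G : Type*) [Group G] (k : Type*) [CommRing k]
    (W : Type*) [AddCommGroup W] [Module k W]
    (V : Type*) [AddCommGroup V] [Module k V] (ρ : Representation k G V) :
    ∃ e : ((G →₀ W) ⊗[k] V) ≃ₗ[k] (G →₀ (W ⊗[k] V)),
      (∀ (g : G) (w : W) (v : V),
        e (Finsupp.single g w ⊗ₜ[k] v) = Finsupp.single g (w ⊗ₜ[k] (ρ g⁻¹) v)) ∧
      (∀ (g : G) (x : (G →₀ W) ⊗[k] V),
        e (TensorProduct.map (Finsupp.lmapDomain W k (fun h => g * h)) (ρ g) x) =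
          Finsupp.mapDomain (fun h => g * h) (e x)) := by
  classical
  refine ⟨(TensorProduct.finsuppLeft k k W V G) ≪≫ₗ untwist G k W V ρ, ?_, ?_⟩
  · intro g w v
    simp [TensorProduct.finsuppLeft_apply_tmul, Finsupp.sum_single_index, untwist_single]
  · intro g x
    have key : ∀ (h : G) (w : W) (v : V),
        ((TensorProduct.finsuppLeft k k W V G) ≪≫ₗ untwist G k W V ρ)
          (TensorProduct.map (Finsupp.lmapDomain W k (fun h => g * h)) (ρ g)
            (Finsupp.single h w ⊗ₜ[k] v)) =
        Finsupp.mapDomain (fun h => g * h)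
          (((TensorProduct.finsuppLeft k k W V G) ≪≫ₗ untwist G k W V ρ)
            (Finsupp.single h w ⊗ₜ[k] v)) := by
      intro h w v
      simp only [TensorProduct.map_tmul, Finsupp.lmapDomain_apply,
        Finsupp.mapDomain_single, LinearEquiv.trans_apply]
      rw [TensorProduct.finsuppLeft_apply_tmul, Finsupp.sum_single_index (by simp),
        TensorProduct.finsuppLeft_apply_tmul, Finsupp.sum_single_index (by simp),
        untwist_single, untwist_single, Finsupp.mapDomain_single]
      congr 1
      simp only [LinearMap.lTensor_tmul]
      congr 1
      rw [← Module.End.mul_apply, ← map_mul, mul_inv_rev, mul_assoc]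
      simp
    induction x using TensorProduct.induction_on with
    | zero => simp
    | add a b ha hb => simp [map_add, Finsupp.mapDomain_add, ha, hb]
    | tmul p v =>
      induction p using Finsupp.induction_linear with
      | zero => simp
      | add a b ha hb =>
        simp only [add_tmul, map_add, Finsupp.mapDomain_add] at *
        rw [ha, hb]
      | single h w => exact key h w v
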